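/- arXiv:1703.07146 — 2 statements merged into one kernel-verified Lean document; each statement's English description precedes it below -/
import Mathlib

section
/- Let f ∈ S be a nonzero homogeneous polynomial of degree d ≥ 1. Then the ℂ-vector space { η ∈ Ω^n_d : f divides every coefficient of df ∧ η } is the internal direct sum of its two subspaces { h·ω_n : h ∈ S_{d−n−1} } and { η ∈ Ω^n_d : df ∧ η = 0 }. -/
open scoped TensorProduct

set_option synthInstance.maxHeartbeats 1000000
set_option maxHeartbeats 2000000

noncomputable section

/-- The graded polynomial ring `S = ℂ[x_0,…,x_n]`. -/
abbrev SP (n : ℕ) := MvPolynomial (Fin (n + 1)) ℂ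

/-- The exterior algebra over `ℂ` on the span of `dx_0,…,dx_n`. -/
abbrev Lam (n : ℕ) := ExteriorAlgebra ℂ (Fin (n + 1) → ℂ)

/-- The algebra `Ω` of polynomial differential forms on `ℂ^{n+1}`. -/
abbrev Om (n : ℕ) := SP n ⊗[ℂ] Lam n


/-- Helper instance. -/
instance omSubAddCommGroup (n : ℕ) (A : Submodule ℂ (Om n)) : AddCommGroup ↥A :=
  inferInstance

/-- The basic one-form `dx_i` (the exterior algebra part). -/
def lamdx (n : ℕ) (i : Fin (n + 1)) : Lam n :=
  ExteriorAlgebra.ι ℂ (Pi.single i 1)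

/-- `dx_0 ∧ dx_1 ∧ … ∧ dx_n`, i.e. `ω'_n` (exterior algebra part). -/
def topLam (n : ℕ) : Lam n :=
  (List.ofFn fun i : Fin (n + 1) => lamdx n i).prod

/-- `dx_0 ∧ … ∧ dx_{i-1} ∧ dx_{i+1} ∧ … ∧ dx_n` (exterior algebra part). -/
def omitLam (n : ℕ) (i : Fin (n + 1)) : Lam n :=
  (List.ofFn fun j : Fin n => lamdx n (i.succAbove j)).prod

/-- The one-form `df = Σ_i (∂f/∂x_i)·dx_i`. -/
def oneForm (n : ℕ) (f : SP n) : Om n :=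
  ∑ i, (MvPolynomial.pderiv i f) ⊗ₜ[ℂ] lamdx n i

/-- The exterior derivative `d : Ω → Ω` (as a `ℂ`-linear map), sending
`a·dx_{i_1}∧…∧dx_{i_j}` to `Σ_i (∂a/∂x_i)·dx_i∧dx_{i_1}∧…∧dx_{i_j}`. -/
def extd (n : ℕ) : Om n →ₗ[ℂ] Om n :=
  ∑ i : Fin (n + 1),
    TensorProduct.map (MvPolynomial.pderiv i).toLinearMap
      (LinearMap.mulLeft ℂ (lamdx n i))

/-- The `ℂ`-linear map `r ↦ ω(r) = Σ_i (−1)^i·r_i·dx_0∧…∧\hat{dx_i}∧…∧dx_n`. -/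
def omegaR (n : ℕ) : (Fin (n + 1) → SP n) →ₗ[ℂ] Om n :=
  ∑ i : Fin (n + 1), ((-1 : ℂ) ^ (i : ℕ)) •
    (((TensorProduct.mk ℂ (SP n) (Lam n)).flip (omitLam n i)).comp
      (LinearMap.proj (R := ℂ) i))

/-- The Euler form `ω_n = Σ_i (−1)^i·x_i·dx_0∧…∧\hat{dx_i}∧…∧dx_n`. -/
def eulerForm (n : ℕ) : Om n :=
  omegaR n fun i => MvPolynomial.X i

/-- `S_q`, the homogeneous component of degree `q ∈ ℤ` of `S` (zero for `q < 0`). -/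
def Shom (n : ℕ) (q : ℤ) : Submodule ℂ (SP n) :=
  Submodule.span ℂ {a : SP n | ∃ m : ℕ, (m : ℤ) = q ∧ a.IsHomogeneous m}

/-- `Ω^j_q`: the span of the forms `a·dx_{i_1}∧…∧dx_{i_j}` with `i_1 < … < i_j`
and `a ∈ S_{q−j}`. -/
def OmegaComp (n : ℕ) (j q : ℤ) : Submodule ℂ (Om n) :=
  Submodule.span ℂ
    { w | ∃ (m : ℕ) (a : SP n) (s : Fin m → Fin (n + 1)),
        (m : ℤ) = j ∧ a ∈ Shom n (q - j) ∧ StrictMono s ∧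
        w = a ⊗ₜ[ℂ] (List.ofFn fun t => lamdx n (s t)).prod }

/-- `Ω^j`: the span of the forms `a·dx_{i_1}∧…∧dx_{i_j}` with `i_1 < … < i_j`. -/
def OmegaJ (n : ℕ) (j : ℕ) : Submodule ℂ (Om n) :=
  Submodule.span ℂ
    { w | ∃ (a : SP n) (s : Fin j → Fin (n + 1)), StrictMono s ∧
        w = a ⊗ₜ[ℂ] (List.ofFn fun t => lamdx n (s t)).prod }



open MvPolynomial ExteriorAlgebra

section Stmt6Aux

variable {n : ℕ}

/-! ### Exterior algebra computations -/

lemma lamdx_mul_omitLam_ne {i j : Fin (n+1)} (hj : j ≠ i) :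
    lamdx n j * omitLam n i = 0 := by
  obtain ⟨k, hk⟩ := Fin.exists_succAbove_eq hj
  have := ExteriorAlgebra.ι_mul_prod_list (R := ℂ)
    (fun t : Fin n => (Pi.single (i.succAbove t) 1 : Fin (n+1) → ℂ)) k
  simpa [lamdx, omitLam, hk] using this

lemma lamdx_mul_omitLam_self (i : Fin (n+1)) :
    lamdx n i * omitLam n i = ((-1:ℂ)^(i:ℕ)) • topLam n := by
  have h1 : lamdx n i * omitLam n i =
      ExteriorAlgebra.ιMulti ℂ (n+1)
        ((fun k : Fin (n+1) => (Pi.single k 1 : Fin (n+1) → ℂ)) ∘ (i.cycleRange).symm) := by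
    rw [ιMulti_apply, List.ofFn_succ]
    simp only [List.prod_cons, Function.comp_apply, Fin.cycleRange_symm_zero,
      Fin.cycleRange_symm_succ]
    rfl
  have h2 : ExteriorAlgebra.ιMulti ℂ (n+1)
      ((fun k : Fin (n+1) => (Pi.single k 1 : Fin (n+1) → ℂ)) ∘
        ((i.cycleRange).symm : Equiv.Perm (Fin (n+1)))) =
      (Equiv.Perm.sign (i.cycleRange).symm) • ExteriorAlgebra.ιMulti ℂ (n+1)
        (fun k : Fin (n+1) => (Pi.single k 1 : Fin (n+1) → ℂ)) :=
    AlternatingMap.map_perm _ _ _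
  have h3 : ExteriorAlgebra.ιMulti ℂ (n+1) (fun k : Fin (n+1) => (Pi.single k 1 : Fin (n+1) → ℂ))
      = topLam n := by rw [ιMulti_apply]; rfl
  have h4 : Equiv.Perm.sign (i.cycleRange).symm = (-1)^(i:ℕ) := by
    rw [Equiv.Perm.sign_symm, Fin.sign_cycleRange]
  rw [h1, h2, h3, h4]
  generalize topLam n = z
  rw [Units.smul_def, ← Int.cast_smul_eq_zsmul ℂ]
  push_cast
  ring_nf

lemma strictMono_eq_succAbove {s : Fin n → Fin (n+1)} (hs : StrictMono s) :
    ∃ i, s = Fin.succAbove i := by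
  have hns : ¬ Function.Surjective s := by
    intro h
    have := Fintype.card_le_of_surjective s h
    simp at this
  rw [Function.Surjective] at hns
  push_neg at hns
  obtain ⟨i, hi⟩ := hns
  refine ⟨i, ?_⟩
  have hcard : ({i}ᶜ : Finset (Fin (n+1))).card = n := by
    rw [Finset.card_compl]
    simp
  have h1 : ∀ k, s k ∈ ({i}ᶜ : Finset (Fin (n+1))) := fun k =>
    Finset.mem_compl.mpr (by simpa using fun h => hi k h)
  have h2 : ∀ k, Fin.succAbove i k ∈ ({i}ᶜ : Finset (Fin (n+1))) := fun k =>
    Finset.mem_compl.mpr (by simpa using Fin.succAbove_ne i k)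
  rw [Finset.orderEmbOfFin_unique hcard h1 hs,
    Finset.orderEmbOfFin_unique hcard h2 (Fin.strictMono_succAbove i)]

/-! ### The coefficient-extraction functional -/

def phiLam (n : ℕ) : Lam n →ₗ[ℂ] ℂ :=
  ExteriorAlgebra.liftAlternating
    (Pi.single (n+1) (Matrix.detRowAlternating : (Fin (n+1) → ℂ) [⋀^Fin (n+1)]→ₗ[ℂ] ℂ))

lemma phiLam_topLam (n : ℕ) : phiLam n (topLam n) = 1 := by
  have h3 : ExteriorAlgebra.ιMulti ℂ (n+1) (fun k : Fin (n+1) => (Pi.single k 1 : Fin (n+1) → ℂ))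
      = topLam n := by rw [ιMulti_apply]; rfl
  rw [← h3, phiLam, liftAlternating_apply_ιMulti, Pi.single_eq_same]
  show Matrix.det (Matrix.of fun k : Fin (n+1) => (Pi.single k 1 : Fin (n+1) → ℂ)) = 1
  have h1 : (Matrix.of fun k : Fin (n+1) => (Pi.single k 1 : Fin (n+1) → ℂ)) = 1 := by
    ext i j
    rw [Matrix.one_apply]
    simp [Pi.single_apply, eq_comm]
  rw [h1, Matrix.det_one]

def Phi (n : ℕ) : Om n →ₗ[ℂ] SP n :=
  (TensorProduct.rid ℂ (SP n)).toLinearMap.comp ((phiLam n).lTensor (SP n))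

lemma Phi_tmul (a : SP n) (u : Lam n) : Phi n (a ⊗ₜ[ℂ] u) = phiLam n u • a := by
  simp [Phi, TensorProduct.rid_tmul]

lemma Phi_tmul_topLam (a : SP n) : Phi n (a ⊗ₜ[ℂ] topLam n) = a := by
  rw [Phi_tmul, phiLam_topLam, one_smul]

lemma tmul_topLam_eq_zero {a : SP n} (h : a ⊗ₜ[ℂ] topLam n = 0) : a = 0 := by
  have := congrArg (Phi n) h
  rwa [Phi_tmul_topLam, map_zero] at this

lemma Phi_mulLeft (f : SP n) (w : Om n) :
    Phi n ((f ⊗ₜ[ℂ] (1 : Lam n)) * w) = f * Phi n w := by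
  induction w using TensorProduct.induction_on with
  | zero => rw [mul_zero, map_zero, mul_zero]
  | tmul a u =>
      rw [Algebra.TensorProduct.tmul_mul_tmul, one_mul, Phi_tmul, Phi_tmul]
      rw [mul_smul_comm]
  | add x y hx hy => rw [mul_add, map_add, hx, hy, map_add, mul_add]

/-! ### The graded pieces `Shom` -/

lemma Shom_natCast (n m : ℕ) :
    Shom n (m : ℤ) = homogeneousSubmodule (Fin (n+1)) ℂ m := by
  unfold Shom
  have h : {a : SP n | ∃ m' : ℕ, (m' : ℤ) = (m:ℤ) ∧ a.IsHomogeneous m'} =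
      (homogeneousSubmodule (Fin (n+1)) ℂ m : Set (SP n)) := by
    ext a
    constructor
    · rintro ⟨m', hm', h⟩
      have : m' = m := by exact_mod_cast hm'
      subst this
      exact h
    · exact fun h => ⟨m, rfl, h⟩
  rw [h, Submodule.span_eq]

lemma Shom_bot (n : ℕ) {q : ℤ} (hq : q < 0) : Shom n q = ⊥ := by
  unfold Shom
  convert Submodule.span_empty
  ext a
  simp only [Set.mem_setOf_eq, Set.mem_empty_iff_false, iff_false]
  rintro ⟨m, hm, -⟩
  omega

lemma mem_Shom {q : ℤ} {m : ℕ} (hm : (m:ℤ) = q) {a : SP n}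
    (h : a.IsHomogeneous m) : a ∈ Shom n q :=
  Submodule.subset_span ⟨m, hm, h⟩

lemma Shom_elim {q : ℤ} {a : SP n} (h : a ∈ Shom n q) :
    a = 0 ∨ ∃ m : ℕ, (m:ℤ) = q ∧ a.IsHomogeneous m := by
  rcases lt_or_ge q 0 with hq | hq
  · rw [Shom_bot n hq, Submodule.mem_bot] at h
    exact Or.inl h
  · obtain ⟨m, rfl⟩ : ∃ m : ℕ, (m:ℤ) = q := ⟨q.toNat, Int.toNat_of_nonneg hq⟩
    rw [Shom_natCast, mem_homogeneousSubmodule] at h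
    exact Or.inr ⟨m, rfl, h⟩

lemma Shom_mul {q : ℤ} {kb : ℕ} {a b : SP n} (ha : a ∈ Shom n q)
    (hb : b.IsHomogeneous kb) : a * b ∈ Shom n (q + kb) := by
  rcases Shom_elim ha with rfl | ⟨m, hm, h⟩
  · rw [zero_mul]; exact (Shom n _).zero_mem
  · exact mem_Shom (by push_cast [← hm]; ring) (h.mul hb)

/-! ### Homogeneity, derivatives, Euler's identity -/

lemma support_degree {d : ℕ} {f : SP n} (hf : f.IsHomogeneous d)
    {v : Fin (n+1) →₀ ℕ} (hv : v ∈ f.support) : v.degree = d := by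
  by_contra h
  exact (mem_support_iff.mp hv) (hf.coeff_eq_zero h)

lemma pderiv_isHomogeneous {d : ℕ} {f : SP n} (hf : f.IsHomogeneous d)
    (i : Fin (n+1)) : (MvPolynomial.pderiv i f).IsHomogeneous (d - 1) := by
  conv_lhs => rw [← f.support_sum_monomial_coeff]
  rw [map_sum]
  apply IsHomogeneous.sum
  intro v hv
  rw [pderiv_monomial]
  by_cases h : v i = 0
  · rw [h]; norm_num
    exact isHomogeneous_zero _ _ _
  · apply isHomogeneous_monomial
    have hle : Finsupp.single i 1 ≤ v := by
      rw [Finsupp.single_le_iff]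
      omega
    have h1 : v = (v - Finsupp.single i 1) + Finsupp.single i 1 :=
      (tsub_add_cancel_of_le hle).symm
    have h5 : v.degree = (v - Finsupp.single i 1).degree + (Finsupp.single i 1).degree := by
      conv_lhs => rw [h1]
      simp [Finsupp.degree_eq_weight_one, map_add]
    have h2 : (Finsupp.single i (1:ℕ)).degree = 1 := by
      simp [Finsupp.degree_eq_weight_one, Finsupp.weight_apply, Finsupp.sum_single_index]
    have hd := support_degree hf hv
    omega

lemma euler {d : ℕ} {f : SP n} (hf : f.IsHomogeneous d) :
    ∑ i : Fin (n+1), MvPolynomial.X i * MvPolynomial.pderiv i f = d • f := by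
  have key : ∀ v ∈ f.support, ∀ i : Fin (n+1),
      X i * pderiv i (monomial v (coeff v f)) = monomial v ((v i : ℂ) * coeff v f) := by
    intro v hv i
    rw [pderiv_monomial]
    by_cases h : v i = 0
    · simp [h]
    · rw [X, monomial_mul]
      congr 1
      · ext j
        have hle : Finsupp.single i 1 ≤ v := by rw [Finsupp.single_le_iff]; omega
        rw [add_tsub_cancel_of_le hle]
      · ring
  conv_lhs =>
    rw [← f.support_sum_monomial_coeff]
  rw [Finset.sum_congr rfl fun i _ => by
    rw [map_sum (pderiv i), Finset.mul_sum]]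
  rw [Finset.sum_comm]
  conv_lhs =>
    rw [Finset.sum_congr rfl fun v hv => Finset.sum_congr rfl fun i _ => key v hv i]
  have step2 : ∀ v ∈ f.support,
      ∑ i : Fin (n+1), monomial v ((v i : ℂ) * coeff v f) = d • monomial v (coeff v f) := by
    intro v hv
    rw [← map_sum, ← Finset.sum_mul, ← Nat.cast_sum]
    have hs : ∑ i : Fin (n+1), v i = v.degree := by
      rw [Finsupp.degree]
      exact (Finset.sum_subset (Finset.subset_univ _) (by
        intro x _ hx
        exact Finsupp.notMem_support_iff.mp hx)).symm
    rw [hs, support_degree hf hv]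
    rw [← map_nsmul]
    congr 1
    rw [nsmul_eq_mul]
  rw [Finset.sum_congr rfl step2, ← Finset.smul_sum, f.support_sum_monomial_coeff]

lemma divide {q : ℤ} {d : ℕ} {f c h₀ : SP n} (hf : f.IsHomogeneous d)
    (hc : c ∈ Shom n q) (heq : c = f * h₀) :
    ∃ h, h ∈ Shom n (q - d) ∧ c = f * h := by
  by_cases hc0 : c = 0
  · subst hc0
    refine ⟨0, (Shom n _).zero_mem, by rw [mul_zero]⟩
  rcases Shom_elim hc with rfl | ⟨m, hm, hhom⟩
  · exact absurd rfl hc0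
  set D := h₀.totalDegree with hD
  have hsum : h₀ = ∑ k ∈ Finset.range (D + 1), homogeneousComponent k h₀ :=
    (sum_homogeneousComponent h₀).symm
  have hexp : c = ∑ k ∈ Finset.range (D + 1), f * homogeneousComponent k h₀ := by
    rw [heq]; conv_lhs => rw [hsum]
    rw [Finset.mul_sum]
  have hcomp : ∀ k, homogeneousComponent m (f * homogeneousComponent k h₀) =
      if m = d + k then f * homogeneousComponent k h₀ else 0 := by
    intro k
    exact homogeneousComponent_of_mem (hf.mul (homogeneousComponent_isHomogeneous k h₀))
  have hm2 : homogeneousComponent m c = c := by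
    rw [homogeneousComponent_of_mem hhom, if_pos rfl]
  have hc2 : c = ∑ k ∈ Finset.range (D + 1),
      if m = d + k then f * homogeneousComponent k h₀ else 0 := by
    conv_lhs => rw [← hm2, hexp]
    rw [map_sum]
    exact Finset.sum_congr rfl fun k _ => hcomp k
  by_cases hcase : d ≤ m ∧ m - d ≤ D
  · refine ⟨homogeneousComponent (m - d) h₀, ?_, ?_⟩
    · exact mem_Shom (by omega) (homogeneousComponent_isHomogeneous _ _)
    · rw [hc2, Finset.sum_eq_single (m - d)]
      · rw [if_pos (by omega)]
      · intro k _ hk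
        rw [if_neg (by omega)]
      · intro hk
        exact absurd (Finset.mem_range.mpr (by omega)) hk
  · exfalso
    apply hc0
    rw [hc2]
    apply Finset.sum_eq_zero
    intro k hk
    rw [Finset.mem_range] at hk
    by_cases hmk : m = d + k
    · exfalso
      rcases not_and_or.mp hcase with h1 | h1 <;> omega
    · rw [if_neg hmk]

/-! ### Multiplication computations in `Om` -/

lemma oneForm_mul_tmul (f : SP n) (a : SP n) (u : Lam n) :
    oneForm n f * (a ⊗ₜ[ℂ] u) =
      ∑ i, (MvPolynomial.pderiv i f * a) ⊗ₜ[ℂ] (lamdx n i * u) := by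
  rw [oneForm, Finset.sum_mul]
  exact Finset.sum_congr rfl fun i _ => Algebra.TensorProduct.tmul_mul_tmul _ _ _ _

lemma oneForm_mul_omit (f : SP n) (a : SP n) (i : Fin (n+1)) :
    oneForm n f * (a ⊗ₜ[ℂ] omitLam n i) =
      ((-1:ℂ)^(i:ℕ)) • ((MvPolynomial.pderiv i f * a) ⊗ₜ[ℂ] topLam n) := by
  rw [oneForm_mul_tmul, Finset.sum_eq_single_of_mem i (Finset.mem_univ i)
    (fun j _ hj => by rw [lamdx_mul_omitLam_ne hj, TensorProduct.tmul_zero]),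
    lamdx_mul_omitLam_self, TensorProduct.tmul_smul]

def Mmap (n : ℕ) : SP n →ₗ[ℂ] Om n :=
  (omegaR n).comp (LinearMap.pi fun i => LinearMap.mulRight ℂ (MvPolynomial.X i))

lemma Mmap_apply (g : SP n) :
    Mmap n g = ∑ i : Fin (n+1), ((-1:ℂ)^(i:ℕ)) •
      ((g * MvPolynomial.X i) ⊗ₜ[ℂ] omitLam n i) := by
  simp only [Mmap, omegaR, LinearMap.comp_apply, LinearMap.sum_apply, LinearMap.smul_apply,
    LinearMap.proj_apply, LinearMap.flip_apply, TensorProduct.mk_apply, LinearMap.pi_apply,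
    LinearMap.mulRight_apply]

lemma oneForm_mul_Mmap {d : ℕ} {f : SP n} (hf : f.IsHomogeneous d) (g : SP n) :
    oneForm n f * Mmap n g = ((d • f) * g) ⊗ₜ[ℂ] topLam n := by
  rw [Mmap_apply, Finset.mul_sum]
  have key : ∀ i : Fin (n+1), i ∈ Finset.univ → oneForm n f * (((-1:ℂ)^(i:ℕ)) •
      ((g * MvPolynomial.X i) ⊗ₜ[ℂ] omitLam n i)) =
      (MvPolynomial.X i * MvPolynomial.pderiv i f * g) ⊗ₜ[ℂ] topLam n := by
    intro i _
    rw [mul_smul_comm, oneForm_mul_omit, smul_smul]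
    have he : (-1:ℂ)^(i:ℕ) * (-1:ℂ)^(i:ℕ) = 1 := by
      rw [← pow_add]; exact Even.neg_one_pow ⟨(i:ℕ), rfl⟩
    rw [he, one_smul]
    congr 1
    ring
  rw [Finset.sum_congr rfl key, ← TensorProduct.sum_tmul, ← Finset.sum_mul, euler hf]

lemma Mmap_le_OmegaComp (d : ℕ) :
    Submodule.map (Mmap n) (Shom n ((d:ℤ) - n - 1)) ≤ OmegaComp n n d := by
  rw [Submodule.map_le_iff_le_comap, Shom, Submodule.span_le]
  rintro a ⟨m, hm, ha⟩
  simp only [SetLike.mem_coe, Submodule.mem_comap]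
  rw [Mmap_apply]
  apply Submodule.sum_mem
  intro i _
  apply Submodule.smul_mem
  apply Submodule.subset_span
  exact ⟨n, a * MvPolynomial.X i, i.succAbove, rfl,
    mem_Shom (by push_cast; omega) (ha.mul (MvPolynomial.isHomogeneous_X ℂ i)),
    Fin.strictMono_succAbove i, rfl⟩

lemma psi_mem {d : ℕ} (hd : 1 ≤ d) {f : SP n} (hf : f.IsHomogeneous d) {η : Om n}
    (hη : η ∈ OmegaComp n n d) :
    ∃ c ∈ Shom n (2*(d:ℤ) - n - 1), oneForm n f * η = c ⊗ₜ[ℂ] topLam n := by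
  have key : OmegaComp n n d ≤ Submodule.comap (LinearMap.mulLeft ℂ (oneForm n f))
      (Submodule.map ((TensorProduct.mk ℂ (SP n) (Lam n)).flip (topLam n))
        (Shom n (2*(d:ℤ) - n - 1))) := by
    rw [OmegaComp, Submodule.span_le]
    rintro w ⟨m, a, s, hmn, ha, hs, rfl⟩
    have hm : n = m := by exact_mod_cast hmn.symm
    subst hm
    obtain ⟨i, rfl⟩ := strictMono_eq_succAbove hs
    simp only [SetLike.mem_coe, Submodule.mem_comap, LinearMap.mulLeft_apply]
    have homit : (List.ofFn fun t => lamdx n (Fin.succAbove i t)).prod = omitLam n i := rfl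
    rw [homit, oneForm_mul_omit]
    apply Submodule.smul_mem
    refine ⟨MvPolynomial.pderiv i f * a, ?_, rfl⟩
    have hmem := Shom_mul ha (pderiv_isHomogeneous hf i)
    rw [show MvPolynomial.pderiv i f * a = a * MvPolynomial.pderiv i f from mul_comm _ _,
      show (2*(d:ℤ) - n - 1) = ((d:ℤ) - n) + ((d-1:ℕ):ℤ) by rw [Nat.cast_sub hd]; push_cast; ring]
    exact hmem
  obtain ⟨c, hc, hceq⟩ := key hη
  exact ⟨c, hc, hceq.symm⟩

end Stmt6Aux

/-- for `f` nonzero homogeneous of degree `d ≥ 1`, the `ℂ`-vector space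
`{ η ∈ Ω^n_d : f divides every coefficient of df ∧ η }` is the internal direct sum of
its two subspaces `{ h·ω_n : h ∈ S_{d−n−1} }` and `{ η ∈ Ω^n_d : df ∧ η = 0 }`
(where `f` dividing a form coefficientwise means the form lies in `f·Ω`). -/
theorem stmt6 (n : ℕ) (hn : 1 ≤ n) (d : ℕ) (hd : 1 ≤ d) (f : SP n) (hf0 : f ≠ 0)
    (hf : f.IsHomogeneous d) :
    (Submodule.map
        ((omegaR n).comp (LinearMap.pi fun i => LinearMap.mulRight ℂ (MvPolynomial.X i)))
        (Shom n ((d : ℤ) - n - 1)) ≤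
      OmegaComp n n d ⊓ Submodule.comap (LinearMap.mulLeft ℂ (oneForm n f))
        (LinearMap.range (LinearMap.mulLeft ℂ (f ⊗ₜ[ℂ] (1 : Lam n))))) ∧
    (OmegaComp n n d ⊓ LinearMap.ker (LinearMap.mulLeft ℂ (oneForm n f)) ≤
      OmegaComp n n d ⊓ Submodule.comap (LinearMap.mulLeft ℂ (oneForm n f))
        (LinearMap.range (LinearMap.mulLeft ℂ (f ⊗ₜ[ℂ] (1 : Lam n))))) ∧
    (Submodule.map
        ((omegaR n).comp (LinearMap.pi fun i => LinearMap.mulRight ℂ (MvPolynomial.X i)))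
        (Shom n ((d : ℤ) - n - 1)) ⊓
      (OmegaComp n n d ⊓ LinearMap.ker (LinearMap.mulLeft ℂ (oneForm n f))) = ⊥) ∧
    (Submodule.map
        ((omegaR n).comp (LinearMap.pi fun i => LinearMap.mulRight ℂ (MvPolynomial.X i)))
        (Shom n ((d : ℤ) - n - 1)) ⊔
      (OmegaComp n n d ⊓ LinearMap.ker (LinearMap.mulLeft ℂ (oneForm n f))) =
      OmegaComp n n d ⊓ Submodule.comap (LinearMap.mulLeft ℂ (oneForm n f))
        (LinearMap.range (LinearMap.mulLeft ℂ (f ⊗ₜ[ℂ] (1 : Lam n))))) := by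
  have hd0 : (d:ℂ) ≠ 0 := Nat.cast_ne_zero.mpr (by omega)
  have part1 : Submodule.map (Mmap n) (Shom n ((d : ℤ) - n - 1)) ≤
      OmegaComp n n d ⊓ Submodule.comap (LinearMap.mulLeft ℂ (oneForm n f))
        (LinearMap.range (LinearMap.mulLeft ℂ (f ⊗ₜ[ℂ] (1 : Lam n)))) := by
    rintro w ⟨g, hg, rfl⟩
    refine ⟨Mmap_le_OmegaComp d ⟨g, hg, rfl⟩, ?_⟩
    rw [SetLike.mem_coe, Submodule.mem_comap, LinearMap.mem_range]
    refine ⟨(d • g) ⊗ₜ[ℂ] topLam n, ?_⟩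
    rw [LinearMap.mulLeft_apply, LinearMap.mulLeft_apply,
      Algebra.TensorProduct.tmul_mul_tmul, one_mul, oneForm_mul_Mmap hf g]
    congr 1
    rw [mul_smul_comm, smul_mul_assoc]
  have part2 : OmegaComp n n d ⊓ LinearMap.ker (LinearMap.mulLeft ℂ (oneForm n f)) ≤
      OmegaComp n n d ⊓ Submodule.comap (LinearMap.mulLeft ℂ (oneForm n f))
        (LinearMap.range (LinearMap.mulLeft ℂ (f ⊗ₜ[ℂ] (1 : Lam n)))) := by
    rintro η ⟨h1, h2⟩
    refine ⟨h1, ?_⟩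
    rw [SetLike.mem_coe, Submodule.mem_comap]
    have h2' : (LinearMap.mulLeft ℂ (oneForm n f)) η = 0 := h2
    rw [h2']
    exact (LinearMap.range _).zero_mem
  refine ⟨part1, part2, ?_, ?_⟩
  · rw [eq_bot_iff]
    rintro w ⟨⟨g, hg, rfl⟩, -, hker⟩
    have h0 : ((d • f) * g) ⊗ₜ[ℂ] topLam n = 0 := by
      rw [← oneForm_mul_Mmap hf g]
      exact LinearMap.mem_ker.mp hker
    have h1 : (d • f) * g = 0 := tmul_topLam_eq_zero h0
    have hdf : d • f ≠ 0 := by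
      rw [← Nat.cast_smul_eq_nsmul ℂ]
      exact smul_ne_zero hd0 hf0
    have hg0 : g = 0 := by
      rcases mul_eq_zero.mp h1 with h | h
      · exact absurd h hdf
      · exact h
    rw [Submodule.mem_bot, hg0, map_zero]
  · apply le_antisymm (sup_le part1 part2)
    rintro η ⟨hK, hR⟩
    have hR' : (LinearMap.mulLeft ℂ (oneForm n f)) η ∈
        LinearMap.range (LinearMap.mulLeft ℂ (f ⊗ₜ[ℂ] (1 : Lam n))) := hR
    obtain ⟨μ, hμ⟩ := hR'
    obtain ⟨c, hc, hceq⟩ := psi_mem hd hf hK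
    have hPc : c = f * Phi n μ := by
      have h := congrArg (Phi n) hμ
      rw [LinearMap.mulLeft_apply, LinearMap.mulLeft_apply, Phi_mulLeft, hceq,
        Phi_tmul_topLam] at h
      exact h.symm
    obtain ⟨h, hh, hch⟩ := divide hf hc hPc
    have hh' : h ∈ Shom n ((d:ℤ) - n - 1) := by
      rwa [show (2*(d:ℤ) - n - 1) - d = (d:ℤ) - n - 1 by ring] at hh
    have hg : (d:ℂ)⁻¹ • h ∈ Shom n ((d:ℤ) - n - 1) := Submodule.smul_mem _ _ hh'
    set g : SP n := (d:ℂ)⁻¹ • h with hgdef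
    have hψη1 : oneForm n f * Mmap n g = c ⊗ₜ[ℂ] topLam n := by
      rw [oneForm_mul_Mmap hf g, hch]
      congr 1
      rw [hgdef, mul_smul_comm, ← Nat.cast_smul_eq_nsmul ℂ, smul_mul_assoc, smul_smul,
        inv_mul_cancel₀ hd0, one_smul]
    rw [Submodule.mem_sup]
    refine ⟨Mmap n g, ⟨g, hg, rfl⟩, η - Mmap n g, ⟨?_, ?_⟩, by abel⟩
    · exact Submodule.sub_mem _ hK (Mmap_le_OmegaComp d ⟨g, hg, rfl⟩)
    · rw [SetLike.mem_coe, LinearMap.mem_ker, map_sub]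
      simp only [LinearMap.mulLeft_apply]
      rw [hceq, hψη1, sub_self]

end
end

section
/- Let f ∈ S be a nonzero homogeneous polynomial of degree d ≥ 1. For every η ∈ Ω^n_d such that f divides every coefficient of df ∧ η, there exists η′ ∈ Ω^n_d with df ∧ η′ = 0 and f·dη − df ∧ η = f·dη′. Consequently, the ℂ-subspace { f·dη − df ∧ η : η ∈ Ω^n_d, f divides df ∧ η } of Ω^{n+1}_{2d} equals f·{ dη′ : η′ ∈ Ω^n_d, df ∧ η′ = 0 }. -/
open scoped TensorProduct

set_option synthInstance.maxHeartbeats 1000000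
set_option maxHeartbeats 2000000

noncomputable section

namespace StmtAux
open MvPolynomial ExteriorAlgebra

variable {n : ℕ}

def vv (n : ℕ) (i : Fin (n+1)) : Fin (n+1) → ℂ := Pi.single i 1

lemma topLam_eq : topLam n = ιMulti ℂ (n+1) (vv n) := (ιMulti_apply _).symm

lemma omitLam_eq (j : Fin (n+1)) :
    omitLam n j = ιMulti ℂ n (fun t => vv n (j.succAbove t)) := (ιMulti_apply _).symm

lemma units_smul (i : ℕ) (x : Lam n) : ((-1 : ℤˣ)^i : ℤˣ) • x = ((-1:ℂ)^i) • x := by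
  rcases Nat.even_or_odd i with h | h
  · rw [h.neg_one_pow, h.neg_one_pow, one_smul, one_smul]
  · rw [h.neg_one_pow, h.neg_one_pow, Units.smul_def]
    norm_num

lemma lamdx_mul_omitLam (i j : Fin (n+1)) :
    lamdx n i * omitLam n j =
      if i = j then ((-1:ℂ)^(i:ℕ)) • topLam n else 0 := by
  have key : lamdx n i * omitLam n j
      = ιMulti ℂ (n+1) (Fin.cons (vv n i) (fun t => vv n (j.succAbove t))) := by
    rw [ιMulti_succ_apply]
    simp only [Fin.cons_zero, Matrix.vecTail, Function.comp_def, Fin.cons_succ]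
    rw [← omitLam_eq]
    rfl
  split_ifs with h
  · subst h
    have hfun : (Fin.cons (vv n i) (fun t => vv n (i.succAbove t)) : Fin (n+1) → _)
        = vv n ∘ (i.cycleRange.symm : Equiv.Perm (Fin (n+1))) := by
      funext t
      induction t using Fin.cases with
      | zero => simp
      | succ t => simp
    rw [key, hfun, AlternatingMap.map_perm]
    rw [Equiv.Perm.sign_symm, Fin.sign_cycleRange, ← topLam_eq, units_smul]
  · obtain ⟨t, ht⟩ := Fin.exists_succAbove_eq h
    rw [key]
    exact AlternatingMap.map_eq_zero_of_eq _ _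
      (by simp [ht]) (Ne.symm (Fin.succ_ne_zero t))

lemma omegaR_apply (b : Fin (n+1) → SP n) :
    omegaR n b = ∑ i : Fin (n+1), ((-1:ℂ)^(i.val)) • (b i ⊗ₜ[ℂ] omitLam n i) := by
  simp [omegaR, LinearMap.sum_apply]

lemma extd_tmul (a : SP n) (m : Lam n) :
    extd n (a ⊗ₜ[ℂ] m) = ∑ i, (pderiv i a) ⊗ₜ[ℂ] (lamdx n i * m) := by
  simp [extd, LinearMap.sum_apply]

lemma oneForm_mul_omegaR (f : SP n) (b : Fin (n+1) → SP n) :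
    oneForm n f * omegaR n b = (∑ i, pderiv i f * b i) ⊗ₜ[ℂ] topLam n := by
  rw [oneForm, omegaR_apply, Finset.sum_mul_sum]
  rw [TensorProduct.sum_tmul]
  refine Finset.sum_congr rfl fun i _ => ?_
  rw [Finset.sum_eq_single i]
  · rw [mul_smul_comm, Algebra.TensorProduct.tmul_mul_tmul, lamdx_mul_omitLam,
      if_pos rfl, TensorProduct.tmul_smul, smul_smul, ← pow_add, ← two_mul,
      pow_mul, neg_one_sq, one_pow, one_smul]
  · intro j _ hj
    rw [mul_smul_comm, Algebra.TensorProduct.tmul_mul_tmul, lamdx_mul_omitLam,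
      if_neg (Ne.symm hj), TensorProduct.tmul_zero, smul_zero]
  · intro h; exact absurd (Finset.mem_univ i) h

lemma extd_omegaR (b : Fin (n+1) → SP n) :
    extd n (omegaR n b) = (∑ i, pderiv i (b i)) ⊗ₜ[ℂ] topLam n := by
  rw [omegaR_apply, map_sum, TensorProduct.sum_tmul]
  refine Finset.sum_congr rfl fun j _ => ?_
  rw [map_smul, extd_tmul, Finset.sum_eq_single j]
  · rw [lamdx_mul_omitLam, if_pos rfl, TensorProduct.tmul_smul, smul_smul,
      ← pow_add, ← two_mul, pow_mul, neg_one_sq, one_pow, one_smul]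
  · intro i _ hi
    rw [lamdx_mul_omitLam, if_neg hi, TensorProduct.tmul_zero]
  · intro h; exact absurd (Finset.mem_univ j) h

lemma tmul_one_mul_tmul (f a : SP n) (m : Lam n) :
    (f ⊗ₜ[ℂ] (1 : Lam n)) * (a ⊗ₜ[ℂ] m) = (f * a) ⊗ₜ[ℂ] m := by
  rw [Algebra.TensorProduct.tmul_mul_tmul, one_mul]

def detF (n : ℕ) (i : ℕ) : (Fin (n+1) → ℂ) [⋀^Fin i]→ₗ[ℂ] ℂ :=
  if h : i = n + 1 then
    AlternatingMap.domDomCongr (finCongr h.symm) Matrix.detRowAlternating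
  else 0

def lamTop (n : ℕ) : Lam n →ₗ[ℂ] ℂ := liftAlternating (detF n)

lemma lamTop_topLam : lamTop n (topLam n) = 1 := by
  rw [topLam_eq, lamTop, liftAlternating_apply_ιMulti, detF, dif_pos rfl]
  have : (vv n : Fin (n+1) → Fin (n+1) → ℂ) = (1 : Matrix (Fin (n+1)) (Fin (n+1)) ℂ) := by
    funext i j
    simp [vv, Matrix.one_apply, Pi.single_apply, eq_comm]
  simp only [AlternatingMap.domDomCongr_apply, finCongr_refl, Equiv.coe_refl,
    Function.comp_id]
  rw [show Matrix.detRowAlternating (vv n) = Matrix.det (Matrix.of (vv n)) from rfl, this]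
  exact Matrix.det_one

def piTop (n : ℕ) : Om n →ₗ[ℂ] SP n :=
  (TensorProduct.rid ℂ (SP n)).toLinearMap ∘ₗ
    TensorProduct.map LinearMap.id (lamTop n)

lemma piTop_tmul (a : SP n) (m : Lam n) : piTop n (a ⊗ₜ[ℂ] m) = lamTop n m • a := by
  simp [piTop, TensorProduct.rid_tmul]

lemma piTop_f_mul (f : SP n) (ξ : Om n) :
    piTop n ((f ⊗ₜ[ℂ] (1 : Lam n)) * ξ) = f * piTop n ξ := by
  induction ξ using TensorProduct.induction_on with
  | zero => simp
  | tmul a m =>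
      rw [Algebra.TensorProduct.tmul_mul_tmul, one_mul, piTop_tmul, piTop_tmul,
        mul_smul_comm]
  | add x y hx hy => rw [mul_add, map_add, hx, hy, map_add, mul_add]

lemma sum_univ_eq_degree (s : Fin (n+1) →₀ ℕ) : ∑ i, s i = s.degree := by
  rw [Finsupp.degree]
  exact (Finset.sum_subset (Finset.subset_univ _)
    (fun i _ hi => Finsupp.notMem_support_iff.mp hi)).symm

lemma euler_monomial (s : Fin (n+1) →₀ ℕ) (c : ℂ) :
    ∑ i, X i * pderiv i (monomial s c) = s.degree • monomial s c := by
  have : ∀ i : Fin (n+1),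
      X i * pderiv i (monomial s c) = s i • monomial s c := by
    intro i
    rw [pderiv_monomial]
    rcases Nat.eq_zero_or_pos (s i) with h | h
    · simp [h]
    · rw [X, monomial_mul, one_mul, add_tsub_cancel_of_le
        (Finsupp.single_le_iff.mpr h)]
      rw [smul_monomial]
      congr 1
      rw [nsmul_eq_mul, mul_comm]
  rw [Finset.sum_congr rfl fun i _ => this i, ← Finset.sum_smul,
    sum_univ_eq_degree]

lemma euler {f : SP n} {m : ℕ} (hf : f.IsHomogeneous m) :
    ∑ i, X i * pderiv i f = m • f := by
  conv_lhs => rw [f.as_sum]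
  have : ∀ i : Fin (n+1), X i * pderiv i (∑ v ∈ f.support, monomial v (coeff v f))
      = ∑ v ∈ f.support, X i * pderiv i (monomial v (coeff v f)) := by
    intro i; rw [map_sum, Finset.mul_sum]
  rw [Finset.sum_congr rfl fun i _ => this i, Finset.sum_comm]
  have : ∀ v ∈ f.support, ∑ i, X i * pderiv i (monomial v (coeff v f))
      = m • monomial v (coeff v f) := by
    intro v hv
    rw [euler_monomial]
    congr 1
    by_contra h
    exact mem_support_iff.mp hv (hf.coeff_eq_zero h)
  rw [Finset.sum_congr rfl this, ← Finset.smul_sum, ← f.as_sum]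

lemma pderiv_isHomogeneous {f : SP n} {m : ℕ} (hf : f.IsHomogeneous m)
    (i : Fin (n+1)) : (pderiv i f).IsHomogeneous (m - 1) := by
  have : pderiv i f = ∑ v ∈ f.support, monomial (v - Finsupp.single i 1) (coeff v f * v i) := by
    conv_lhs => rw [f.as_sum, map_sum]
    exact Finset.sum_congr rfl fun v _ => pderiv_monomial
  rw [this]
  apply IsHomogeneous.sum
  intro v hv
  rcases Nat.eq_zero_or_pos (v i) with h | h
  · rw [h]; norm_num
    exact isHomogeneous_zero _ _ _
  · apply isHomogeneous_monomial
    have hv' : v.degree = m := by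
      by_contra h'
      exact mem_support_iff.mp hv (hf.coeff_eq_zero h')
    have hle : Finsupp.single i 1 ≤ v := Finsupp.single_le_iff.mpr h
    have hadd : ∀ a b : Fin (n+1) →₀ ℕ, (a + b).degree = a.degree + b.degree := by
      intro a b
      simp only [Finsupp.degree_eq_weight_one, map_add]
    have hsingle : (Finsupp.single i 1 : Fin (n+1) →₀ ℕ).degree = 1 := by
      simp [Finsupp.degree_apply, Finsupp.support_single_ne_zero i one_ne_zero]
    have := hadd (v - Finsupp.single i 1) (Finsupp.single i 1)
    rw [tsub_add_cancel_of_le hle, hv', hsingle] at this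
    omega

lemma mem_Shom_iff {e : ℕ} {a : SP n} :
    a ∈ Shom n (e : ℤ) ↔ a.IsHomogeneous e := by
  constructor
  · intro h
    have : Shom n (e : ℤ) ≤ homogeneousSubmodule (Fin (n+1)) ℂ e := by
      rw [Shom, Submodule.span_le]
      rintro a ⟨m, hm, ha⟩
      have : m = e := by exact_mod_cast hm
      subst this
      exact (mem_homogeneousSubmodule _ _).mpr ha
    exact (mem_homogeneousSubmodule _ _).mp (this h)
  · intro h
    exact Submodule.subset_span ⟨e, rfl, h⟩

lemma Shom_neg_eq_bot {q : ℤ} (hq : q < 0) {a : SP n} (ha : a ∈ Shom n q) : a = 0 := by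
  have : {a : SP n | ∃ m : ℕ, (m : ℤ) = q ∧ a.IsHomogeneous m} = ∅ := by
    ext a
    simp only [Set.mem_setOf_eq, Set.mem_empty_iff_false, iff_false]
    rintro ⟨m, hm, -⟩
    omega
  rw [Shom, this, Submodule.span_empty, Submodule.mem_bot] at ha
  exact ha

lemma homComp_mul {f : SP n} {d : ℕ} (hf : f.IsHomogeneous d) (u : SP n) (k : ℕ) :
    homogeneousComponent (d + k) (f * u) = f * homogeneousComponent k u := by
  conv_lhs => rw [← sum_homogeneousComponent u, Finset.mul_sum, map_sum]
  have hterm : ∀ j : ℕ, homogeneousComponent (d + k) (f * homogeneousComponent j u)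
      = if j = k then f * homogeneousComponent j u else 0 := by
    intro j
    have hmem : f * homogeneousComponent j u ∈ homogeneousSubmodule (Fin (n+1)) ℂ (d + j) :=
      (mem_homogeneousSubmodule _ _).mpr (hf.mul (homogeneousComponent_isHomogeneous j u))
    rw [homogeneousComponent_of_mem hmem]
    congr 1
    simp [Nat.add_right_cancel_iff, eq_comm]
  rw [Finset.sum_congr rfl fun j _ => hterm j, Finset.sum_ite_eq' _ k
    (fun j => f * homogeneousComponent j u)]
  split_ifs with h
  · rfl
  · rw [homogeneousComponent_eq_zero, mul_zero]
    simp only [Finset.mem_range, not_lt] at h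
    omega

lemma homComp_lt {f : SP n} {d : ℕ} (hf : f.IsHomogeneous d) (u : SP n) {m : ℕ}
    (hm : m < d) : homogeneousComponent m (f * u) = 0 := by
  conv_lhs => rw [← sum_homogeneousComponent u, Finset.mul_sum, map_sum]
  refine Finset.sum_eq_zero fun j _ => ?_
  have hmem : f * homogeneousComponent j u ∈ homogeneousSubmodule (Fin (n+1)) ℂ (d + j) :=
    (mem_homogeneousSubmodule _ _).mpr (hf.mul (homogeneousComponent_isHomogeneous j u))
  rw [homogeneousComponent_of_mem hmem, if_neg (by omega)]

lemma strictMono_eq_succAbove {n : ℕ} {s : Fin n → Fin (n+1)} (hs : StrictMono s) :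
    ∃ i : Fin (n+1), s = i.succAbove := by
  have hns : ¬ Function.Surjective s := by
    intro h
    have := Fintype.card_le_of_surjective s h
    simp at this
  rw [Function.Surjective] at hns
  push_neg at hns
  obtain ⟨i, hi⟩ := hns
  have hre : Set.range s = Set.range i.succAbove := by
    apply Set.eq_of_subset_of_ncard_le
    · rw [Fin.range_succAbove]
      rintro x ⟨t, rfl⟩
      exact hi t
    · rw [← Set.image_univ, ← Set.image_univ,
        Set.ncard_image_of_injective _ hs.injective,
        Set.ncard_image_of_injective _ (Fin.strictMono_succAbove i).injective]
    · exact Set.toFinite _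
  haveI : WellFoundedLT (Fin n) := inferInstance
  exact ⟨i, (StrictMono.range_inj hs (Fin.strictMono_succAbove i)).mp hre⟩

lemma tmul_omit_mem {d : ℕ} {c : SP n} (i : Fin (n+1))
    (hc : c ∈ Shom n ((d : ℤ) - (n : ℤ))) :
    c ⊗ₜ[ℂ] omitLam n i ∈ OmegaComp n n d :=
  Submodule.subset_span ⟨n, c, i.succAbove, rfl, hc, Fin.strictMono_succAbove i, rfl⟩

lemma omegaR_mem {d : ℕ} {b : Fin (n+1) → SP n}
    (hb : ∀ i, b i ∈ Shom n ((d : ℤ) - (n : ℤ))) :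
    omegaR n b ∈ OmegaComp n n d := by
  rw [omegaR_apply]
  exact Submodule.sum_mem _ fun i _ => Submodule.smul_mem _ _ (tmul_omit_mem i (hb i))

lemma exists_repr {d : ℕ} {η : Om n} (hη : η ∈ OmegaComp n n d) :
    ∃ b : Fin (n+1) → SP n, (∀ i, b i ∈ Shom n ((d : ℤ) - (n : ℤ))) ∧ η = omegaR n b := by
  induction hη using Submodule.span_induction with
  | mem w hw =>
      obtain ⟨m, a, s, hm, ha, hs, rfl⟩ := hw
      have hmn : m = n := by exact_mod_cast hm
      subst hmn
      obtain ⟨i, rfl⟩ := strictMono_eq_succAbove hs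
      refine ⟨Pi.single i (((-1:ℂ)^(i:ℕ)) • a), ?_, ?_⟩
      · intro j
        rcases eq_or_ne j i with rfl | hji
        · rw [Pi.single_eq_same]
          exact Submodule.smul_mem _ _ ha
        · rw [Pi.single_eq_of_ne hji]
          exact Submodule.zero_mem _
      · rw [omegaR_apply, Finset.sum_eq_single i]
        · rw [Pi.single_eq_same, TensorProduct.smul_tmul', smul_smul, ← pow_add,
            ← two_mul, pow_mul, neg_one_sq, one_pow, one_smul]
          rfl
        · intro j _ hj
          rw [Pi.single_eq_of_ne hj, TensorProduct.zero_tmul, smul_zero]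
        · intro h; exact absurd (Finset.mem_univ i) h
  | zero => exact ⟨0, fun i => Submodule.zero_mem _, (map_zero _).symm⟩
  | add x y hx hy ihx ihy =>
      obtain ⟨bx, hbx, rfl⟩ := ihx
      obtain ⟨by', hby, rfl⟩ := ihy
      exact ⟨bx + by', fun i => Submodule.add_mem _ (hbx i) (hby i), (map_add _ _ _).symm⟩
  | smul c x hx ihx =>
      obtain ⟨bx, hbx, rfl⟩ := ihx
      exact ⟨c • bx, fun i => Submodule.smul_mem _ _ (hbx i), (map_smul _ _ _).symm⟩

end StmtAux


/-- for `f` nonzero homogeneous of degree `d ≥ 1`: for every `η ∈ Ω^n_d`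
with `f ∣ df ∧ η` (coefficientwise) there is `η′ ∈ Ω^n_d` with `df ∧ η′ = 0` and
`f·dη − df ∧ η = f·dη′`; consequently
`{ f·dη − df ∧ η : η ∈ Ω^n_d, f ∣ df ∧ η } = f·{ dη′ : η′ ∈ Ω^n_d, df ∧ η′ = 0 }`. -/
theorem stmt7 (n : ℕ) (hn : 1 ≤ n) (d : ℕ) (hd : 1 ≤ d) (f : SP n) (hf0 : f ≠ 0)
    (hf : f.IsHomogeneous d) :
    (∀ η ∈ OmegaComp n n d,
      (∃ ξ : Om n, oneForm n f * η = (f ⊗ₜ[ℂ] (1 : Lam n)) * ξ) →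
      ∃ η' ∈ OmegaComp n n d, oneForm n f * η' = 0 ∧
        (f ⊗ₜ[ℂ] (1 : Lam n)) * extd n η - oneForm n f * η =
          (f ⊗ₜ[ℂ] (1 : Lam n)) * extd n η') ∧
    {w : Om n | ∃ η ∈ OmegaComp n n d,
        (∃ ξ : Om n, oneForm n f * η = (f ⊗ₜ[ℂ] (1 : Lam n)) * ξ) ∧
        w = (f ⊗ₜ[ℂ] (1 : Lam n)) * extd n η - oneForm n f * η} =
      (fun ξ : Om n => (f ⊗ₜ[ℂ] (1 : Lam n)) * ξ) ''
        {w : Om n | ∃ η' ∈ OmegaComp n n d,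
          oneForm n f * η' = 0 ∧ w = extd n η'} := by
  have partA : ∀ η ∈ OmegaComp n n d,
      (∃ ξ : Om n, oneForm n f * η = (f ⊗ₜ[ℂ] (1 : Lam n)) * ξ) →
      ∃ η' ∈ OmegaComp n n d, oneForm n f * η' = 0 ∧
        (f ⊗ₜ[ℂ] (1 : Lam n)) * extd n η - oneForm n f * η =
          (f ⊗ₜ[ℂ] (1 : Lam n)) * extd n η' := by
    rintro η hη ⟨ξ, hξ⟩
    obtain ⟨a, ha, rfl⟩ := StmtAux.exists_repr hη
    set g : SP n := ∑ i, MvPolynomial.pderiv i f * a i with hg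
    have hdf : oneForm n f * omegaR n a = g ⊗ₜ[ℂ] topLam n :=
      StmtAux.oneForm_mul_omegaR f a
    rcases lt_or_ge d n with hdn | hnd
    · -- degenerate case d < n : η = 0
      have haz : a = 0 := funext fun i =>
        StmtAux.Shom_neg_eq_bot (by push_cast; omega) (ha i)
      refine ⟨0, Submodule.zero_mem _, by rw [mul_zero], ?_⟩
      simp [haz]
    · -- main case n ≤ d
      have hcast : (((d - n : ℕ) : ℤ)) = (d : ℤ) - (n : ℤ) := by push_cast; omega
      have hae : ∀ i, (a i).IsHomogeneous (d - n) := fun i =>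
        StmtAux.mem_Shom_iff.mp (by rw [hcast]; exact ha i)
      have hgh : g.IsHomogeneous ((d - 1) + (d - n)) :=
        MvPolynomial.IsHomogeneous.sum _ _ _
          (fun i _ => (StmtAux.pderiv_isHomogeneous hf i).mul (hae i))
      rw [hdf] at hξ
      have hgu := congrArg (StmtAux.piTop n) hξ
      rw [StmtAux.piTop_tmul, StmtAux.lamTop_topLam, one_smul,
        StmtAux.piTop_f_mul] at hgu
      set u : SP n := StmtAux.piTop n ξ with hu
      rcases eq_or_lt_of_le hnd with hnd' | hnd'
      · -- d = n : g = 0 and η' = η works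
        have hg0 : g = 0 := by
          have h1 : g ∈ MvPolynomial.homogeneousSubmodule (Fin (n+1)) ℂ (d - 1) := by
            rw [MvPolynomial.mem_homogeneousSubmodule]
            have : (d - 1) + (d - n) = d - 1 := by omega
            rw [← this]
            exact hgh
          have h2 := MvPolynomial.homogeneousComponent_of_mem (m := d - 1) (n := d - 1) h1
          rw [if_pos rfl] at h2
          rw [← h2, hgu, StmtAux.homComp_lt hf u (by omega)]
        refine ⟨omegaR n a, hη, ?_, ?_⟩
        · rw [hdf, hg0, TensorProduct.zero_tmul]
        · rw [hdf, hg0, TensorProduct.zero_tmul, sub_zero]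
      · -- n < d
        set k : ℕ := d - n - 1 with hk
        set h : SP n := MvPolynomial.homogeneousComponent k u with hh
        have hfh : f * h = g := by
          have h1 : g ∈ MvPolynomial.homogeneousSubmodule (Fin (n+1)) ℂ (d + k) := by
            rw [MvPolynomial.mem_homogeneousSubmodule]
            have : (d - 1) + (d - n) = d + k := by omega
            rw [← this]
            exact hgh
          have h2 := MvPolynomial.homogeneousComponent_of_mem (m := d + k) (n := d + k) h1
          rw [if_pos rfl] at h2
          rw [hh, ← StmtAux.homComp_mul hf u k, ← hgu, h2]
        have hhhom : h.IsHomogeneous k :=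
          MvPolynomial.homogeneousComponent_isHomogeneous k u
        have hdC : ((d : ℂ)) ≠ 0 := by
          exact_mod_cast Nat.pos_iff_ne_zero.mp (by omega)
        set b : Fin (n+1) → SP n := fun i => a i - (d : ℂ)⁻¹ • (h * MvPolynomial.X i)
          with hb
        have hbmem : ∀ i, b i ∈ Shom n ((d : ℤ) - (n : ℤ)) := by
          intro i
          refine Submodule.sub_mem _ (ha i) (Submodule.smul_mem _ _ ?_)
          rw [← hcast]
          apply StmtAux.mem_Shom_iff.mpr
          have : (h * MvPolynomial.X i).IsHomogeneous (k + 1) :=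
            hhhom.mul (MvPolynomial.isHomogeneous_X _ i)
          have hkk : k + 1 = d - n := by omega
          rw [← hkk]
          exact this
        have hsumb : ∑ i, MvPolynomial.pderiv i f * b i = 0 := by
          simp only [hb, mul_sub, Finset.sum_sub_distrib, ← hg]
          have : ∀ i : Fin (n+1), MvPolynomial.pderiv i f * ((d : ℂ)⁻¹ • (h * MvPolynomial.X i))
              = (d : ℂ)⁻¹ • (h * (MvPolynomial.X i * MvPolynomial.pderiv i f)) := by
            intro i; rw [mul_smul_comm]; ring_nf
          rw [Finset.sum_congr rfl fun i _ => this i, ← Finset.smul_sum, ← Finset.mul_sum,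
            StmtAux.euler hf]
          rw [← Nat.cast_smul_eq_nsmul ℂ d f, mul_smul_comm, smul_smul,
            inv_mul_cancel₀ hdC, one_smul, mul_comm, hfh, sub_self]
        have hdivb : ∑ i, MvPolynomial.pderiv i (b i)
            = (∑ i, MvPolynomial.pderiv i (a i)) - h := by
          simp only [hb, map_sub, Finset.sum_sub_distrib]
          congr 1
          have : ∀ i : Fin (n+1), MvPolynomial.pderiv i ((d : ℂ)⁻¹ • (h * MvPolynomial.X i))
              = (d : ℂ)⁻¹ • (MvPolynomial.X i * MvPolynomial.pderiv i h + h) := by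
            intro i
            rw [Derivation.map_smul, MvPolynomial.pderiv_mul, MvPolynomial.pderiv_X_self, mul_one]
            congr 1
            rw [mul_comm]
          rw [Finset.sum_congr rfl fun i _ => this i, ← Finset.smul_sum,
            Finset.sum_add_distrib, StmtAux.euler hhhom, Finset.sum_const,
            Finset.card_univ, Fintype.card_fin]
          rw [← Nat.cast_smul_eq_nsmul ℂ k h, ← Nat.cast_smul_eq_nsmul ℂ (n+1) h,
            ← add_smul, smul_smul]
          have : ((k : ℂ) + ((n : ℕ) + 1 : ℕ)) = (d : ℂ) := by
            push_cast; have : k + (n + 1) = d := by omega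
            exact_mod_cast congrArg (Nat.cast : ℕ → ℂ) this
          rw [this, inv_mul_cancel₀ hdC, one_smul]
        refine ⟨omegaR n b, StmtAux.omegaR_mem hbmem, ?_, ?_⟩
        · rw [StmtAux.oneForm_mul_omegaR, hsumb, TensorProduct.zero_tmul]
        · rw [StmtAux.extd_omegaR, StmtAux.extd_omegaR, hdf,
            StmtAux.tmul_one_mul_tmul, StmtAux.tmul_one_mul_tmul,
            ← TensorProduct.sub_tmul, hdivb, mul_sub, hfh]
  refine ⟨partA, ?_⟩
  ext w
  constructor
  · rintro ⟨η, hη, hdiv, rfl⟩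
    obtain ⟨η', hη', h0, heq⟩ := partA η hη hdiv
    exact ⟨extd n η', ⟨η', hη', h0, rfl⟩, heq.symm⟩
  · rintro ⟨ω, ⟨η', hη', h0, rfl⟩, rfl⟩
    exact ⟨η', hη', ⟨0, by rw [h0, mul_zero]⟩, by rw [h0, sub_zero]⟩

end
end
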